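/- Let k ≥ 2 and let T be a tree with diam(T) ≥ k + 2. If u is a diametral leaf of T that is a k-twin, then mdi_k(T ∖ u) ≤ mdi_k(T) − 2, where T ∖ u is the tree obtained from T by deleting u. -/

import Mathlib

/-- `J` is a distance-`k` independent set in `G`: any two distinct vertices of `J`
are at graph distance at least `k + 1`. -/
def DkIndep {V : Type*} (G : SimpleGraph V) (k : ℕ) (J : Set V) : Prop :=
  ∀ ⦃u⦄, u ∈ J → ∀ ⦃v⦄, v ∈ J → u ≠ v → k + 1 ≤ G.dist u v

/-- `J` is a maximal distance-`k` independent set (`k`-MDIS) of `G`. -/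
def MaxDkIndep {V : Type*} (G : SimpleGraph V) (k : ℕ) (J : Set V) : Prop :=
  DkIndep G k J ∧ ∀ J', DkIndep G k J' → J ⊆ J' → J' = J

/-- `mdi G k` is the number of maximal distance-`k` independent sets of `G`. -/
noncomputable def mdi {V : Type*} (G : SimpleGraph V) (k : ℕ) : ℕ :=
  {J : Set V | MaxDkIndep G k J}.ncard

/-- `f_k(n)` from the paper. -/
def fk (k n : ℕ) : ℕ :=
  if n ≤ k + 1 then n else n - (n - k % 2) / (k / 2 + 1) + 1

/-- closed ball `N_k[x]`. -/
def ball {V : Type*} (G : SimpleGraph V) (k : ℕ) (x : V) : Set V :=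
  {v | G.dist x v ≤ k}

/-- a leaf is a vertex of degree 1. -/
def IsLeaf {V : Type*} (G : SimpleGraph V) (v : V) : Prop :=
  (G.neighborSet v).ncard = 1

/-- eccentricity of a vertex. -/
noncomputable def ecc {V : Type*} [Fintype V] (G : SimpleGraph V) (v : V) : ℕ :=
  Finset.univ.sup (G.dist v)

/-- diameter of a finite graph. -/
noncomputable def gdiam {V : Type*} [Fintype V] (G : SimpleGraph V) : ℕ :=
  Finset.univ.sup (ecc G)

/-- a central vertex is one of minimum eccentricity. -/
def IsCentral {V : Type*} [Fintype V] (G : SimpleGraph V) (v : V) : Prop :=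
  ∀ u, ecc G v ≤ ecc G u

/-- a `k`-twin: some other vertex has the same closed `k`-ball. -/
def KTwin {V : Type*} (G : SimpleGraph V) (k : ℕ) (u : V) : Prop :=
  ∃ v, v ≠ u ∧ ball G k u = ball G k v

/-- a diametral leaf: a leaf whose eccentricity equals the diameter. -/
def IsDiametralLeaf {V : Type*} [Fintype V] (G : SimpleGraph V) (u : V) : Prop :=
  IsLeaf G u ∧ ecc G u = gdiam G

/-- a `k`-special pair. -/
def KSpecial {V : Type*} [Fintype V] (G : SimpleGraph V) (k : ℕ) (x y : V) : Prop :=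
  IsDiametralLeaf G x ∧ IsDiametralLeaf G y ∧ KTwin G k x ∧ KTwin G k y ∧
    ball G k x ≠ ball G k y

/-- `mdi*_k(G, ℓ)`. -/
noncomputable def mdiStar {V : Type*} (G : SimpleGraph V) (k : ℕ) (ℓ : V) : ℕ :=
  {J : Set V | MaxDkIndep G k J ∧ ℓ ∈ J ∧ ∃ w ∉ J, ball G k w ∩ J = {ℓ}}.ncard

/-- The spider tree `S_{p,m}`: a center (`none`) together with `p` legs of `m` vertices. -/
def spider (p m : ℕ) : SimpleGraph (Option (Fin p × Fin m)) :=
  SimpleGraph.fromRel fun a b =>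
    match a, b with
    | none, some (_, j) => (j : ℕ) = 0
    | some (i, j), some (i', j') => i = i' ∧ (j : ℕ) + 1 = (j' : ℕ)
    | _, _ => False

/-- `S'_{p,m}`: the spider `S_{p,m}` with one leaf at distance `m` from the center removed. -/
def spider' (p m : ℕ) (hp : 0 < p) (hm : 0 < m) :=
  (spider p m).induce
    {v | v ≠ some (⟨0, hp⟩, ⟨m - 1, Nat.sub_lt hm Nat.one_pos⟩)}

/-- The double spider `B_{p₁,p₂,s}`: two adjacent centers (`Sum.inl false`, `Sum.inl true`),
with `p₁` legs of `s` vertices on the first and `p₂` legs of `s` vertices on the second. -/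
def btree (p₁ p₂ s : ℕ) : SimpleGraph (Bool ⊕ ((Fin p₁ ⊕ Fin p₂) × Fin s)) :=
  SimpleGraph.fromRel fun a b =>
    match a, b with
    | Sum.inl x, Sum.inl y => x ≠ y
    | Sum.inl false, Sum.inr (Sum.inl _, j) => (j : ℕ) = 0
    | Sum.inl true, Sum.inr (Sum.inr _, j) => (j : ℕ) = 0
    | Sum.inr (c, j), Sum.inr (c', j') => c = c' ∧ (j : ℕ) + 1 = (j' : ℕ)
    | _, _ => False

/-- `G` contains a subgraph isomorphic to `H`. -/
def ContainsSub {V W : Type*} (G : SimpleGraph V) (H : SimpleGraph W) : Prop :=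
  ∃ f : W → V, Function.Injective f ∧ ∀ a b, H.Adj a b → G.Adj (f a) (f b)

/-- A pendant path on `s` vertices `P 0, …, P (s-1)` attached to `w`:
`P 0` is a leaf, consecutive vertices are adjacent, interior vertices have degree 2,
and `P (s-1)` is adjacent to `w`. -/
def IsPendantPath {V : Type*} (T : SimpleGraph V) (s : ℕ) (P : ℕ → V) (w : V) : Prop :=
  Set.InjOn P (Set.Iio s) ∧ (∀ i < s, P i ≠ w) ∧ IsLeaf T (P 0) ∧
    (∀ i, i + 1 < s → T.Adj (P i) (P (i + 1))) ∧
    (∀ i, 0 < i → i < s → (T.neighborSet (P i)).ncard = 2) ∧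
    T.Adj (P (s - 1)) w

/-- Isomorphism of simple graphs on `Fin n` as a setoid. -/
def graphSetoid (n : ℕ) : Setoid (SimpleGraph (Fin n)) where
  r G H := Nonempty (G ≃g H)
  iseqv := ⟨fun _ => ⟨SimpleGraph.Iso.refl⟩, fun ⟨e⟩ => ⟨e.symm⟩, fun ⟨e⟩ ⟨f⟩ => ⟨e.trans f⟩⟩

/-- The number of isomorphism classes of graphs in a set of graphs on `Fin n`. -/
noncomputable def numIsoClasses {n : ℕ} (S : Set (SimpleGraph (Fin n))) : ℕ :=
  ((fun G => Quotient.mk (graphSetoid n) G) '' S).ncard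

open SimpleGraph

private lemma exists_max_ext {W : Type*} [Finite W] (G : SimpleGraph W) (k : ℕ) (S : Set W)
    (hS : DkIndep G k S) : ∃ J, S ⊆ J ∧ MaxDkIndep G k J := by
  classical
  obtain ⟨J, hJ, hmax⟩ := Set.Finite.exists_maximalFor id {J : Set W | DkIndep G k J ∧ S ⊆ J}
    (Set.toFinite _) ⟨S, hS, subset_rfl⟩
  exact ⟨J, hJ.2, hJ.1, fun J' hJ' hsub => Set.Subset.antisymm (hmax ⟨hJ', hJ.2.trans hsub⟩ hsub) hsub⟩

private lemma leaf_not_mem_path {V : Type*} {T : SimpleGraph V} {u : V} (hleaf : IsLeaf T u)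
    {a b : V} (p : T.Walk a b) (hp : p.IsPath) (ha : a ≠ u) (hb : b ≠ u) : u ∉ p.support := by
  classical
  intro hu
  obtain ⟨n, hn⟩ := Set.ncard_eq_one.mp hleaf
  have hspec := p.take_spec hu
  have hnodup : ((p.takeUntil u hu).append (p.dropUntil u hu)).support.Nodup := by
    rw [hspec]; exact hp.support_nodup
  rw [SimpleGraph.Walk.support_append, List.nodup_append] at hnodup
  have hdisj := hnodup.2.2
  -- n is in the support of takeUntil
  have hnq : n ∈ (p.takeUntil u hu).support := by
    obtain ⟨w, hadj, q', heq⟩ :=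
      Walk.exists_eq_cons_of_ne (fun h => ha h.symm) (p.takeUntil u hu).reverse
    have hw : w = n := by
      have : w ∈ T.neighborSet u := hadj
      rw [hn] at this; exact this
    have : w ∈ (p.takeUntil u hu).reverse.support := by
      rw [heq]; simp [Walk.support_cons]
    rw [Walk.support_reverse, List.mem_reverse] at this
    rwa [hw] at this
  -- n is in the tail of the support of dropUntil
  have hnr : n ∈ (p.dropUntil u hu).support.tail := by
    obtain ⟨w, hadj, q', heq⟩ :=
      Walk.exists_eq_cons_of_ne (fun h => hb h.symm) (p.dropUntil u hu)
    have hw : w = n := by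
      have : w ∈ T.neighborSet u := hadj
      rw [hn] at this; exact this
    rw [heq, Walk.support_cons]
    exact hw ▸ q'.start_mem_support
  exact hdisj n hnq n hnr rfl

private lemma walk_lift {V : Type*} {T : SimpleGraph V} {u : V} {a b : V} (p : T.Walk a b)
    (hsup : ∀ x ∈ p.support, x ≠ u) :
    ∃ q : (T.induce {v | v ≠ u}).Walk ⟨a, hsup a p.start_mem_support⟩
      ⟨b, hsup b p.end_mem_support⟩, q.length = p.length := by
  induction p with
  | nil => exact ⟨SimpleGraph.Walk.nil, rfl⟩
  | @cons a c b hadj p ih =>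
    have hsup' : ∀ x ∈ p.support, x ≠ u := fun x hx => hsup x (by simp [hx])
    obtain ⟨q, hq⟩ := ih hsup'
    have hadj' : (T.induce {v | v ≠ u}).Adj ⟨a, hsup a (by simp)⟩ ⟨c, hsup' c p.start_mem_support⟩ := by
      simp only [SimpleGraph.comap_adj, Function.Embedding.coe_subtype]
      exact hadj
    exact ⟨SimpleGraph.Walk.cons hadj' q, by simp [hq]⟩

private lemma dist_del {V : Type*} {T : SimpleGraph V} {u : V} (hT : T.IsTree)
    (hleaf : IsLeaf T u) (x y : ({v : V | v ≠ u} : Set V)) :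
    (T.induce {v | v ≠ u}).dist x y = T.dist x.1 y.1 := by
  classical
  obtain ⟨p, hp⟩ := hT.isConnected.exists_walk_length_eq_dist x.1 y.1
  have hpath : p.bypass.IsPath := p.bypass_isPath
  have hxu : x.1 ≠ u := x.2
  have hyu : y.1 ≠ u := y.2
  have hnmem := leaf_not_mem_path hleaf p.bypass hpath hxu hyu
  have hsup : ∀ w ∈ p.bypass.support, w ≠ u := fun w hw heq => hnmem (heq ▸ hw)
  obtain ⟨q, hq⟩ := walk_lift p.bypass hsup
  have hle1 : (T.induce {v | v ≠ u}).dist x y ≤ T.dist x.1 y.1 := by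
    calc (T.induce {v | v ≠ u}).dist x y ≤ q.length := SimpleGraph.dist_le q
      _ = p.bypass.length := hq
      _ ≤ p.length := p.length_bypass_le
      _ = T.dist x.1 y.1 := hp
  have hreach : (T.induce {v | v ≠ u}).Reachable x y := ⟨q⟩
  obtain ⟨r, hr⟩ := hreach.exists_walk_length_eq_dist
  have hle2 : T.dist x.1 y.1 ≤ (T.induce {v | v ≠ u}).dist x y := by
    have := SimpleGraph.dist_le (r.map (SimpleGraph.Embedding.induce {v : V | v ≠ u}).toHom)
    rwa [SimpleGraph.Walk.length_map, hr] at this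
  omega

private lemma mdis_transfer {V : Type*} [Fintype V] {T : SimpleGraph V} {u v : V} {k : ℕ}
    (hT : T.IsTree) (hleaf : IsLeaf T u) (hvu : v ≠ u) (hduv : T.dist u v ≤ k)
    (htw : ∀ w, k + 1 ≤ T.dist u w → k + 1 ≤ T.dist v w)
    {J' : Set ({v : V | v ≠ u} : Set V)} (hJ' : MaxDkIndep (T.induce {v | v ≠ u}) k J') :
    MaxDkIndep T k (Subtype.val '' J') := by
  have hdist := dist_del hT hleaf
  constructor
  · rintro a ⟨x, hx, rfl⟩ b ⟨y, hy, rfl⟩ hne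
    have hxy : x ≠ y := fun h => hne (by rw [h])
    have := hJ'.1 hx hy hxy
    rwa [hdist x y] at this
  · intro J'' hind hsub
    by_cases hu : u ∈ J''
    · exfalso
      have hvmem : (⟨v, hvu⟩ : ({v : V | v ≠ u} : Set V)) ∈ J' := by
        have key : ∀ w ∈ J', w ≠ (⟨v, hvu⟩ : ({v : V | v ≠ u} : Set V)) →
            k + 1 ≤ (T.induce {v | v ≠ u}).dist ⟨v, hvu⟩ w := by
          intro w hw hne
          have hwJ'' : w.1 ∈ J'' := hsub ⟨w, hw, rfl⟩
          have hwu : u ≠ w.1 := fun h => w.2 h.symm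
          have h1 : k + 1 ≤ T.dist u w.1 := hind hu hwJ'' hwu
          have h2 := htw w.1 h1
          rw [hdist ⟨v, hvu⟩ w]
          exact h2
        have hK : DkIndep (T.induce {v | v ≠ u}) k (insert ⟨v, hvu⟩ J') := by
          intro x hx y hy hne
          rcases Set.mem_insert_iff.mp hx with rfl | hx
          · rcases Set.mem_insert_iff.mp hy with rfl | hy
            · exact absurd rfl hne
            · exact key y hy (Ne.symm hne)
          · rcases Set.mem_insert_iff.mp hy with rfl | hy
            · have := key x hx hne
              rwa [SimpleGraph.dist_comm]
            · exact hJ'.1 hx hy hne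
        have := hJ'.2 _ hK (Set.subset_insert _ _)
        rw [← this]; exact Set.mem_insert _ _
      have hvJ'' : v ∈ J'' := hsub ⟨_, hvmem, rfl⟩
      have := hind hu hvJ'' (fun h => hvu h.symm)
      omega
    · have hK : DkIndep (T.induce {v | v ≠ u}) k {x : ({v : V | v ≠ u} : Set V) | x.1 ∈ J''} := by
        intro x hx y hy hne
        have hxy : x.1 ≠ y.1 := fun h => hne (Subtype.ext h)
        rw [hdist x y]
        exact hind hx hy hxy
      have hsub2 : J' ⊆ {x : ({v : V | v ≠ u} : Set V) | x.1 ∈ J''} := fun x hx => hsub ⟨x, hx, rfl⟩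
      have heq := hJ'.2 _ hK hsub2
      ext a
      constructor
      · intro ha
        have hau : a ≠ u := fun h => hu (h ▸ ha)
        have : (⟨a, hau⟩ : ({v : V | v ≠ u} : Set V)) ∈ J' := by rw [← heq]; exact ha
        exact ⟨_, this, rfl⟩
      · rintro ⟨x, hx, rfl⟩
        exact hsub ⟨x, hx, rfl⟩

/-- If `T` is a tree with `diam(T) ≥ k + 2` (`k ≥ 2`) and `u` is a
diametral leaf of `T` that is a `k`-twin, then `mdi_k(T ∖ u) ≤ mdi_k(T) − 2`. -/
theorem stmt_7 {V : Type} [Fintype V] (k : ℕ) (hk : 2 ≤ k) (T : SimpleGraph V)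
    (hT : T.IsTree) (hdiam : k + 2 ≤ gdiam T) (u : V)
    (hdl : IsDiametralLeaf T u) (htwin : KTwin T k u) :
    mdi (T.induce {v | v ≠ u}) k ≤ mdi T k - 2 := by
  classical
  obtain ⟨v, hvu, hball⟩ := htwin
  have hleaf := hdl.1
  have hduv : T.dist u v ≤ k := by
    have hv : v ∈ _root_.ball T k v := by simp [_root_.ball, SimpleGraph.dist_self]
    rw [← hball] at hv
    exact hv
  have htw : ∀ w, k + 1 ≤ T.dist u w → k + 1 ≤ T.dist v w := by
    intro w hw
    have : w ∉ _root_.ball T k u := by simp only [_root_.ball, Set.mem_setOf_eq]; omega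
    rw [hball] at this
    simp only [_root_.ball, Set.mem_setOf_eq] at this
    omega
  have : Nonempty V := ⟨u⟩
  obtain ⟨z, -, hz⟩ := Finset.exists_mem_eq_sup Finset.univ Finset.univ_nonempty (T.dist u)
  have hzd : k + 2 ≤ T.dist u z := by
    have h1 : ecc T u = T.dist u z := hz
    rw [← h1, hdl.2]
    exact hdiam
  have huz : u ≠ z := by
    intro h
    rw [h, SimpleGraph.dist_self] at hzd
    omega
  obtain ⟨p, hp⟩ := hT.isConnected.exists_walk_length_eq_dist u z
  obtain ⟨z', hadj, p', heq⟩ := SimpleGraph.Walk.exists_eq_cons_of_ne (Ne.symm huz) p.reverse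
  have hz'd : k + 1 ≤ T.dist u z' := by
    have htri := hT.isConnected.dist_triangle (u := u) (v := z') (w := z)
    have h1 : T.dist z' z = 1 := SimpleGraph.dist_eq_one_iff_adj.mpr hadj.symm
    omega
  have hzz' : z ≠ z' := hadj.ne
  -- two MDISs of T containing u
  have hind1 : DkIndep T k {u, z} := by
    intro a ha b hb hne
    rcases ha with rfl | ha <;> rcases hb with rfl | hb <;>
      first
        | exact absurd rfl hne
        | (rw [Set.mem_singleton_iff] at *; subst_vars;
           first
             | exact absurd rfl hne
             | omega
             | (rw [SimpleGraph.dist_comm]; omega))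
  have hind2 : DkIndep T k {u, z'} := by
    intro a ha b hb hne
    rcases ha with rfl | ha <;> rcases hb with rfl | hb <;>
      first
        | exact absurd rfl hne
        | (rw [Set.mem_singleton_iff] at *; subst_vars;
           first
             | exact absurd rfl hne
             | omega
             | (rw [SimpleGraph.dist_comm]; omega))
  obtain ⟨J₁, hsub₁, hJ₁⟩ := exists_max_ext T k _ hind1
  obtain ⟨J₂, hsub₂, hJ₂⟩ := exists_max_ext T k _ hind2
  have hJne : J₁ ≠ J₂ := by
    intro h
    have hz1 : z ∈ J₁ := hsub₁ (by simp)
    have hz2 : z' ∈ J₁ := h ▸ hsub₂ (by simp)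
    have := hJ₁.1 hz1 hz2 hzz'
    have h1 : T.dist z z' = 1 := SimpleGraph.dist_eq_one_iff_adj.mpr hadj
    omega
  set A := {J : Set V | MaxDkIndep T k J ∧ u ∈ J} with hA
  set B := {J : Set V | MaxDkIndep T k J ∧ u ∉ J} with hB
  have hU : {J : Set V | MaxDkIndep T k J} = A ∪ B := by
    ext J
    by_cases h : u ∈ J <;> simp [hA, hB, h]
  have hdisj : Disjoint A B := Set.disjoint_left.mpr fun J hJA hJB => hJB.2 hJA.2
  have hcard : mdi T k = A.ncard + B.ncard := by
    rw [mdi, hU]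
    exact Set.ncard_union_eq hdisj (Set.toFinite _) (Set.toFinite _)
  have h2 : 2 ≤ A.ncard := by
    have hsubA : ({J₁, J₂} : Set (Set V)) ⊆ A := by
      rintro J (rfl | rfl)
      · exact ⟨hJ₁, hsub₁ (by simp)⟩
      · exact ⟨hJ₂, hsub₂ (by simp)⟩
    calc 2 = ({J₁, J₂} : Set (Set V)).ncard := (Set.ncard_pair hJne).symm
      _ ≤ A.ncard := Set.ncard_le_ncard hsubA (Set.toFinite _)
  have himg : (Set.image (Subtype.val : ({v : V | v ≠ u} : Set V) → V)) ''
      {J' | MaxDkIndep (T.induce {v | v ≠ u}) k J'} ⊆ B := by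
    rintro _ ⟨J', hJ', rfl⟩
    refine ⟨mdis_transfer hT hleaf hvu hduv htw hJ', ?_⟩
    rintro ⟨x, hx, hxu⟩
    exact x.2 hxu
  have hle : mdi (T.induce {v | v ≠ u}) k ≤ B.ncard := by
    rw [mdi, ← Set.ncard_image_of_injective _ (Set.image_injective.mpr Subtype.val_injective)]
    exact Set.ncard_le_ncard himg (Set.toFinite _)
  omega
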